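/- Let x ∈ ℝ^{n+1} with |x| < 1 and let f(y) = |y - x| on ℝ^{n+1} \ {x}. Then for any y with |y| = 1 and any unit vector θ with ⟨y,θ⟩ = 0, the quantity (⟨∇²f(y)θ, θ⟩ - ⟨∇f(y), y⟩)/f(y) is greater than or equal to -1/4. -/

import Mathlib

set_option maxHeartbeats 1000000

open scoped RealInnerProductSpace

variable {E : Type*} [NormedAddCommGroup E] [InnerProductSpace ℝ E]

lemma hasFDerivAt_norm_sub (x z : E) (hz : z ≠ x) :
    HasFDerivAt (fun w => ‖w - x‖) (‖z - x‖⁻¹ • innerSL ℝ (z - x)) z := by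
  have h0 : z - x ≠ 0 := sub_ne_zero.2 hz
  have hr : ‖z - x‖ ≠ 0 := norm_ne_zero_iff.2 h0
  have hsub : HasFDerivAt (fun w : E => w - x) (ContinuousLinearMap.id ℝ E) z :=
    (hasFDerivAt_id z).sub_const x
  have h1 : HasFDerivAt (fun w => ‖w - x‖ ^ 2)
      (2 • (innerSL ℝ (z - x)).comp (ContinuousLinearMap.id ℝ E)) z := hsub.norm_sq
  have h2 := h1.sqrt (by positivity : ‖z - x‖ ^ 2 ≠ 0)
  have heq : (fun w => Real.sqrt (‖w - x‖ ^ 2)) = fun w => ‖w - x‖ := by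
    funext w; rw [Real.sqrt_sq (norm_nonneg _)]
  rw [heq] at h2
  convert h2 using 1
  ext w
  simp only [ContinuousLinearMap.smul_apply, ContinuousLinearMap.coe_smul', Pi.smul_apply,
    ContinuousLinearMap.coe_comp', Function.comp_apply, ContinuousLinearMap.id_apply,
    Real.sqrt_sq (norm_nonneg _), innerSL_apply_apply, smul_eq_mul]
  field_simp
  ring

theorem stmt_5 (n : ℕ) (x : EuclideanSpace ℝ (Fin (n+1))) (hx : ‖x‖ < 1)
    (f : EuclideanSpace ℝ (Fin (n+1)) → ℝ) (hf : ∀ z, f z = ‖z - x‖)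
    (y θ : EuclideanSpace ℝ (Fin (n+1)))
    (hy : ‖y‖ = 1) (hθ : ‖θ‖ = 1) (hyθ : ⟪y, θ⟫ = 0) :
    (iteratedFDeriv ℝ 2 f y ![θ, θ] - fderiv ℝ f y y) / f y ≥ -1/4 := by
  have hfe : f = fun w => ‖w - x‖ := funext hf
  subst hfe
  have hyx : y ≠ x := by intro h; rw [h] at hy; linarith
  have h0 : y - x ≠ 0 := sub_ne_zero.2 hyx
  have hr : (0:ℝ) < ‖y - x‖ := norm_pos_iff.2 h0
  have hrne : ‖y - x‖ ≠ 0 := ne_of_gt hr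
  have hd1 := hasFDerivAt_norm_sub x y hyx
  have hc : HasFDerivAt (fun z : EuclideanSpace ℝ (Fin (n+1)) => ‖z - x‖⁻¹)
      (-(‖y - x‖ ^ 2)⁻¹ • ‖y - x‖⁻¹ • innerSL ℝ (y - x)) y :=
    (hasDerivAt_inv hrne).comp_hasFDerivAt y hd1
  have hsub : HasFDerivAt (fun w : EuclideanSpace ℝ (Fin (n+1)) => w - x)
      (ContinuousLinearMap.id ℝ _) y := (hasFDerivAt_id y).sub_const x
  have hg : HasFDerivAt (fun z : EuclideanSpace ℝ (Fin (n+1)) => innerSL ℝ (z - x))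
      ((innerSL ℝ : EuclideanSpace ℝ (Fin (n+1)) →L[ℝ]
        EuclideanSpace ℝ (Fin (n+1)) →L[ℝ] ℝ).comp (ContinuousLinearMap.id ℝ _)) y :=
    ContinuousLinearMap.hasFDerivAt _ |>.comp y hsub
  have hF : HasFDerivAt (fun z : EuclideanSpace ℝ (Fin (n+1)) => ‖z - x‖⁻¹ • innerSL ℝ (z - x)) _ y :=
    hc.smul hg
  have hev : fderiv ℝ (fun w : EuclideanSpace ℝ (Fin (n+1)) => ‖w - x‖) =ᶠ[nhds y]
      (fun z => ‖z - x‖⁻¹ • innerSL ℝ (z - x)) := by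
    filter_upwards [eventually_ne_nhds hyx] with z hz
    exact (hasFDerivAt_norm_sub x z hz).fderiv
  rw [iteratedFDeriv_two_apply, hd1.fderiv, hev.fderiv_eq, hF.fderiv]
  simp only [Matrix.cons_val_zero, Matrix.cons_val_one, Matrix.head_cons,
    ContinuousLinearMap.add_apply, ContinuousLinearMap.smul_apply,
    ContinuousLinearMap.coe_comp', Function.comp_apply, ContinuousLinearMap.id_apply,
    ContinuousLinearMap.smulRight_apply, innerSL_apply_apply, smul_eq_mul,
    ContinuousLinearMap.coe_smul', Pi.smul_apply]
  have hyy : ⟪y, y⟫ = 1 := by rw [real_inner_self_eq_norm_sq, hy]; norm_num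
  have hθθ : ⟪θ, θ⟫ = 1 := by rw [real_inner_self_eq_norm_sq, hθ]; norm_num
  have hiθ : ⟪y - x, θ⟫ = -⟪x, θ⟫ := by rw [inner_sub_left, hyθ]; ring
  have hiy : ⟪y - x, y⟫ = 1 - ⟪x, y⟫ := by
    rw [inner_sub_left, hyy]
  have hr2 : ‖y - x‖ ^ 2 = 1 - 2 * ⟪x, y⟫ + ‖x‖ ^ 2 := by
    rw [norm_sub_sq_real, hy, real_inner_comm x y]; ring
  have hbes : ⟪x, y⟫ ^ 2 + ⟪x, θ⟫ ^ 2 ≤ ‖x‖ ^ 2 := by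
    have hyx' : ⟪y, x⟫ = ⟪x, y⟫ := real_inner_comm x y
    have hθx' : ⟪θ, x⟫ = ⟪x, θ⟫ := real_inner_comm x θ
    have hθy' : ⟪θ, y⟫ = 0 := by rw [real_inner_comm, hyθ]
    have hxx : ⟪x, x⟫ = ‖x‖ ^ 2 := real_inner_self_eq_norm_sq x
    have h := real_inner_self_nonneg (x := x - ⟪x, y⟫ • y - ⟪x, θ⟫ • θ)
    simp only [inner_sub_left, inner_sub_right, real_inner_smul_left, real_inner_smul_right,
      hyy, hθθ, hyθ, hyx', hθx', hθy', hxx] at h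
    nlinarith [h]
  rw [hiθ, hiy, hθθ]
  set r : ℝ := ‖y - x‖ with hrdef
  set t : ℝ := ⟪x, y⟫ with ht
  set b : ℝ := ⟪x, θ⟫ with hb
  set s : ℝ := ‖x‖ ^ 2 with hs
  have hs1 : s < 1 := by rw [hs]; nlinarith [norm_nonneg x]
  clear_value r t b s
  clear hd1 hc hF hev hiθ hiy hyy hθθ hyθ hg hsub
  have hmain : ∀ A : ℝ, A = (t * r ^ 2 - b ^ 2) / r ^ 4 → A ≥ -1/4 := by
    intro A hA
    rw [hA, ge_iff_le, le_div_iff₀ (by positivity)]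
    nlinarith [hr2, hbes, sq_nonneg (1 - s), sq_nonneg r]
  apply hmain
  field_simp
  ring
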